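/- For the database D over schema {ABC, AB, AC, BC} where relation r0 on attributes {A,B,C} contains tuples {(a,b,c1),(a,b1,c),(a1,b,c)}, r1 on {A,B} contains {(a,b),(a,b1),(a1,b)}, r2 on {A,C} contains {(a,c),(a,c1),(a1,c)}, and r3 on {B,C} contains {(b,c),(b,c1),(b1,c)} (where a,a1,b,b1,c,c1 are pairwise distinct constants), every tuple of every relation of D is the projection of some tuple in the natural join r0 ⋈ r1 ⋈ r2 ⋈ r3; that is, D is fully reduced. -/
import Mathlib


/-- A tuple `t` agrees with tuple `u` on the attribute set `S`. -/
def Agrees {α V : Type} (S : Set α) (t u : α → V) : Prop := ∀ a ∈ S, t a = u a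

/-- The output of the natural join of the relations `R i` with schemas `s i`:
tuples over all attributes whose restriction to each schema lies in the relation. -/
def JoinOut {ι α V : Type} (s : ι → Set α) (R : ι → Set (α → V)) : Set (α → V) :=
  { t | ∀ i, ∃ u ∈ R i, Agrees (s i) t u }

/-- A database is fully reduced if every tuple of every relation is the projection
(restriction to the relation's schema) of some tuple in the full join output. -/
def FullyReduced {ι α V : Type} (s : ι → Set α) (R : ι → Set (α → V)) : Prop :=
  ∀ i, ∀ u ∈ R i, ∃ t ∈ JoinOut s R, Agrees (s i) t u

/-- The database D over schema {ABC, AB, AC, BC} with the indicated tuples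
(a, a1, b, b1, c, c1 pairwise distinct) is fully reduced for the join
ABC ⋈ AB ⋈ AC ⋈ BC. Attributes A,B,C are 0,1,2 : Fin 3. -/
theorem stmt0 {V : Type} (a a1 b b1 c c1 : V)
    (hdist : List.Pairwise (· ≠ ·) [a, a1, b, b1, c, c1])
    (s : Fin 4 → Set (Fin 3))
    (hs : s = ![Set.univ, {0, 1}, {0, 2}, {1, 2}])
    (R : Fin 4 → Set (Fin 3 → V))
    (hR : R = ![ {![a, b, c1], ![a, b1, c], ![a1, b, c]},
                 {u | (u 0 = a ∧ u 1 = b) ∨ (u 0 = a ∧ u 1 = b1) ∨ (u 0 = a1 ∧ u 1 = b)},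
                 {u | (u 0 = a ∧ u 2 = c) ∨ (u 0 = a ∧ u 2 = c1) ∨ (u 0 = a1 ∧ u 2 = c)},
                 {u | (u 1 = b ∧ u 2 = c) ∨ (u 1 = b ∧ u 2 = c1) ∨ (u 1 = b1 ∧ u 2 = c)} ]) :
    FullyReduced s R := by

  subst hs hR
  -- the three full tuples are in the join output
  have hj : ∀ t : Fin 3 → V,
      t ∈ ![({![a, b, c1], ![a, b1, c], ![a1, b, c]} : Set (Fin 3 → V)),
         {u | (u 0 = a ∧ u 1 = b) ∨ (u 0 = a ∧ u 1 = b1) ∨ (u 0 = a1 ∧ u 1 = b)},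
         {u | (u 0 = a ∧ u 2 = c) ∨ (u 0 = a ∧ u 2 = c1) ∨ (u 0 = a1 ∧ u 2 = c)},
         {u | (u 1 = b ∧ u 2 = c) ∨ (u 1 = b ∧ u 2 = c1) ∨ (u 1 = b1 ∧ u 2 = c)}] 0 →
      (∀ i, t ∈ ![({![a, b, c1], ![a, b1, c], ![a1, b, c]} : Set (Fin 3 → V)),
         {u | (u 0 = a ∧ u 1 = b) ∨ (u 0 = a ∧ u 1 = b1) ∨ (u 0 = a1 ∧ u 1 = b)},
         {u | (u 0 = a ∧ u 2 = c) ∨ (u 0 = a ∧ u 2 = c1) ∨ (u 0 = a1 ∧ u 2 = c)},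
         {u | (u 1 = b ∧ u 2 = c) ∨ (u 1 = b ∧ u 2 = c1) ∨ (u 1 = b1 ∧ u 2 = c)}] i) := by
    intro t ht i
    fin_cases i
    · exact ht
    all_goals (
      simp only [Matrix.cons_val_zero, Set.mem_insert_iff, Set.mem_singleton_iff] at ht
      rcases ht with h | h | h <;> subst h <;> simp [Matrix.cons_val_one, Matrix.head_cons])
  intro i u hu
  fin_cases i
  · refine ⟨u, fun j => ⟨u, hj u hu j, fun x _ => rfl⟩, fun x _ => rfl⟩
  · -- r1
    simp only [Matrix.cons_val_one, Matrix.head_cons, Set.mem_setOf_eq] at hu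
    rcases hu with ⟨h0, h1⟩ | ⟨h0, h1⟩ | ⟨h0, h1⟩
    · refine ⟨![a, b, c1], fun j => ⟨![a, b, c1], hj _ (by simp) j, fun x _ => rfl⟩, ?_⟩
      intro x hx
      rcases hx with h | h <;> subst h <;> simp [h0, h1]
    · refine ⟨![a, b1, c], fun j => ⟨![a, b1, c], hj _ (by simp) j, fun x _ => rfl⟩, ?_⟩
      intro x hx
      rcases hx with h | h <;> subst h <;> simp [h0, h1]
    · refine ⟨![a1, b, c], fun j => ⟨![a1, b, c], hj _ (by simp) j, fun x _ => rfl⟩, ?_⟩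
      intro x hx
      rcases hx with h | h <;> subst h <;> simp [h0, h1]
  · -- r2
    simp only [Set.mem_setOf_eq, Matrix.cons_val_two, Matrix.tail_cons, Matrix.head_cons] at hu
    rcases hu with ⟨h0, h1⟩ | ⟨h0, h1⟩ | ⟨h0, h1⟩
    · refine ⟨![a, b1, c], fun j => ⟨![a, b1, c], hj _ (by simp) j, fun x _ => rfl⟩, ?_⟩
      intro x hx
      rcases hx with h | h <;> subst h <;> simp [h0, h1]
    · refine ⟨![a, b, c1], fun j => ⟨![a, b, c1], hj _ (by simp) j, fun x _ => rfl⟩, ?_⟩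
      intro x hx
      rcases hx with h | h <;> subst h <;> simp [h0, h1]
    · refine ⟨![a1, b, c], fun j => ⟨![a1, b, c], hj _ (by simp) j, fun x _ => rfl⟩, ?_⟩
      intro x hx
      rcases hx with h | h <;> subst h <;> simp [h0, h1]
  · -- r3
    simp only [Set.mem_setOf_eq] at hu
    rcases hu with ⟨h0, h1⟩ | ⟨h0, h1⟩ | ⟨h0, h1⟩
    · refine ⟨![a1, b, c], fun j => ⟨![a1, b, c], hj _ (by simp) j, fun x _ => rfl⟩, ?_⟩
      intro x hx
      rcases hx with h | h <;> subst h <;> simp [h0, h1]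
    · refine ⟨![a, b, c1], fun j => ⟨![a, b, c1], hj _ (by simp) j, fun x _ => rfl⟩, ?_⟩
      intro x hx
      rcases hx with h | h <;> subst h <;> simp [h0, h1]
    · refine ⟨![a, b1, c], fun j => ⟨![a, b1, c], hj _ (by simp) j, fun x _ => rfl⟩, ?_⟩
      intro x hx
      rcases hx with h | h <;> subst h <;> simp [h0, h1]
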